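/- Let S be a subset of the Fibonacci numbers with asymptotic density q(S), and Z_n = #(A_n(p) ∩ S). Then Var(Z_n) = o(n²). -/

import Mathlib

open Finset

noncomputable section

def Fib (n : ℕ) : ℕ := Nat.fib (n + 1)

/-- `included c k` : whether `F_{k+1}` is included in the random Zeckendorf process,
given coins `c` (`c k` is the coin for step `k+1`): a Fibonacci number is included
with probability `p` when the previous one was not included, and is excluded otherwise. -/
def included (c : ℕ → Bool) : ℕ → Bool
  | 0 => c 0
  | k + 1 => !included c k && c (k + 1)

/-- Extend a finite coin sequence by `false`. -/
def ext (n : ℕ) (c : Fin n → Bool) : ℕ → Bool :=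
  fun j => if h : j < n then c ⟨j, h⟩ else false

/-- Probability weight of a finite coin sequence, each coin heads with probability `p`. -/
def wt (p : ℝ) {n : ℕ} (c : Fin n → Bool) : ℝ :=
  ∏ i, if c i then p else 1 - p

open Classical in
/-- Probability of an event depending on the first `n` coins. -/
def finProb (p : ℝ) (n : ℕ) (E : (ℕ → Bool) → Prop) : ℝ :=
  ∑ c : Fin n → Bool, if E (ext n c) then wt p c else 0

/-- `Prob (F_k ∈ A(p))` for `k ≥ 1`. -/
def probIncl (p : ℝ) (k : ℕ) : ℝ :=
  finProb p k (fun c => included c (k - 1) = true)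

/-- Expected value of a function of the first `n` coins. -/
def expVal (p : ℝ) (n : ℕ) (f : (ℕ → Bool) → ℝ) : ℝ :=
  ∑ c : Fin n → Bool, wt p c * f (ext n c)

/-- `W_n` : the number of selected indices among `1,...,n`. -/
def countIn (n : ℕ) (c : ℕ → Bool) : ℕ :=
  ((Icc 1 n).filter (fun j => included c (j - 1) = true)).card


-- ### auxiliary lemmas ###

lemma sum_split {n : ℕ} (F : (Fin (n+1) → Bool) → ℝ) :
    ∑ c : Fin (n+1) → Bool, F c
      = ∑ c : Fin n → Bool, (F (Fin.snoc c false) + F (Fin.snoc c true)) := by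
  rw [← Equiv.sum_comp (Fin.snocEquiv (fun _ => Bool)) F, Fintype.sum_prod_type_right]
  simp [Fin.snocEquiv, Fintype.sum_bool, add_comm]

lemma wt_snoc (p : ℝ) {n : ℕ} (c : Fin n → Bool) (b : Bool) :
    wt p (Fin.snoc c b) = wt p c * (if b then p else 1 - p) := by
  simp [wt, Fin.prod_univ_castSucc]

lemma ext_snoc_false {n : ℕ} (c : Fin n → Bool) :
    ext (n+1) (Fin.snoc c false) = ext n c := by
  funext j
  unfold _root_.ext
  rcases lt_trichotomy j n with h | h | h
  · rw [dif_pos (by omega), dif_pos h]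
    simp [Fin.snoc, h]
  · subst h
    rw [dif_pos (by omega), dif_neg (by omega)]
    simp [Fin.snoc]
  · rw [dif_neg (by omega), dif_neg (by omega)]

lemma ext_snoc_lt {n : ℕ} (c : Fin n → Bool) (b : Bool) {j : ℕ} (h : j < n) :
    ext (n+1) (Fin.snoc c b) j = ext n c j := by
  unfold _root_.ext
  rw [dif_pos (by omega), dif_pos h]
  simp [Fin.snoc, h]

lemma ext_snoc_self {n : ℕ} (c : Fin n → Bool) (b : Bool) :
    ext (n+1) (Fin.snoc c b) n = b := by
  unfold _root_.ext
  rw [dif_pos (by omega)]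
  simp [Fin.snoc]

lemma included_congr {c c' : ℕ → Bool} : ∀ {k : ℕ}, (∀ i ≤ k, c i = c' i) →
    included c k = included c' k
  | 0, h => by simp [included, h 0 (le_refl 0)]
  | k + 1, h => by
      simp only [included]
      rw [included_congr (fun i hi => h i (by omega)), h (k+1) (le_refl _)]

lemma included_ext_snoc {n : ℕ} (c : Fin n → Bool) (b : Bool) {k : ℕ} (h : k < n) :
    included (ext (n+1) (Fin.snoc c b)) k = included (ext n c) k :=
  included_congr (fun i hi => ext_snoc_lt c b (by omega))

variable {p : ℝ}

lemma expVal_succ (n : ℕ) (f : (ℕ → Bool) → ℝ) :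
    expVal p (n+1) f = ∑ c : Fin n → Bool,
      wt p c * ((1 - p) * f (ext (n+1) (Fin.snoc c false))
        + p * f (ext (n+1) (Fin.snoc c true))) := by
  rw [expVal, sum_split]
  refine Finset.sum_congr rfl fun c _ => ?_
  rw [wt_snoc, wt_snoc]
  simp only [Bool.false_eq_true, if_false, if_true]
  ring

lemma wt_nonneg (hp0 : 0 ≤ p) (hp1 : p ≤ 1) {n : ℕ} (c : Fin n → Bool) : 0 ≤ wt p c :=
  Finset.prod_nonneg fun i _ => by split <;> linarith

lemma sum_wt (hp0 : 0 ≤ p) : ∀ n, ∑ c : Fin n → Bool, wt p c = 1 := by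
  intro n
  induction n with
  | zero => simp [wt]
  | succ n ih =>
      rw [sum_split (fun c => wt p c)]
      have h : ∀ c : Fin n → Bool, wt p (Fin.snoc c false) + wt p (Fin.snoc c true) = wt p c := by
        intro c
        rw [wt_snoc, wt_snoc]
        simp only [Bool.false_eq_true, if_false, if_true]
        ring
      simp only [h, ih]

lemma expVal_const (hp0 : 0 ≤ p) (n : ℕ) (r : ℝ) :
    expVal p n (fun _ => r) = r := by
  rw [expVal, ← Finset.sum_mul, sum_wt hp0, one_mul]

lemma expVal_restrict (hp0 : 0 ≤ p) {m : ℕ} (f : (ℕ → Bool) → ℝ)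
    (hf : ∀ c c' : ℕ → Bool, (∀ i < m, c i = c' i) → f c = f c') :
    ∀ {n : ℕ}, m ≤ n → expVal p n f = expVal p m f := by
  intro n hn
  induction n with
  | zero => rw [Nat.le_zero.mp hn]
  | succ n ih =>
      rcases Nat.eq_or_lt_of_le hn with h | h
      · rw [h]
      · have hmn : m ≤ n := by omega
        rw [expVal_succ, ← ih hmn, expVal]
        refine Finset.sum_congr rfl fun c _ => ?_
        have h1 : f (ext (n+1) (Fin.snoc c false)) = f (ext n c) :=
          hf _ _ fun i hi => ext_snoc_lt c false (by omega)
        have h2 : f (ext (n+1) (Fin.snoc c true)) = f (ext n c) :=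
          hf _ _ fun i hi => ext_snoc_lt c true (by omega)
        rw [h1, h2]
        ring

lemma expVal_nonneg (hp0 : 0 ≤ p) (hp1 : p ≤ 1) {n : ℕ} {f : (ℕ → Bool) → ℝ}
    (hf : ∀ c, 0 ≤ f c) : 0 ≤ expVal p n f :=
  Finset.sum_nonneg fun c _ => mul_nonneg (wt_nonneg hp0 hp1 c) (hf _)

lemma expVal_mono (hp0 : 0 ≤ p) (hp1 : p ≤ 1) {n : ℕ} {f g : (ℕ → Bool) → ℝ}
    (hfg : ∀ c, f c ≤ g c) : expVal p n f ≤ expVal p n g :=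
  Finset.sum_le_sum fun c _ => mul_le_mul_of_nonneg_left (hfg _) (wt_nonneg hp0 hp1 c)

lemma expVal_add {n : ℕ} (f g : (ℕ → Bool) → ℝ) :
    expVal p n (fun c => f c + g c) = expVal p n f + expVal p n g := by
  simp [expVal, mul_add, Finset.sum_add_distrib]

lemma expVal_smul {n : ℕ} (r : ℝ) (f : (ℕ → Bool) → ℝ) :
    expVal p n (fun c => r * f c) = r * expVal p n f := by
  simp only [expVal, Finset.mul_sum]
  exact Finset.sum_congr rfl fun c _ => by ring

lemma expVal_finsum {n : ℕ} {ι : Type*} (T : Finset ι) (F : ι → (ℕ → Bool) → ℝ) :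
    expVal p n (fun c => ∑ j ∈ T, F j c) = ∑ j ∈ T, expVal p n (F j) := by
  simp only [expVal, Finset.mul_sum]
  exact Finset.sum_comm


def ind (b : Bool) : ℝ := if b then 1 else 0

lemma ind_nonneg (b : Bool) : 0 ≤ ind b := by cases b <;> simp [ind]
lemma ind_le_one (b : Bool) : ind b ≤ 1 := by cases b <;> simp [ind]
lemma ind_mul_self (b : Bool) : ind b * ind b = ind b := by cases b <;> simp [ind]

lemma ext_ge {n : ℕ} (c : Fin n → Bool) {j : ℕ} (h : n ≤ j) : ext n c j = false := by
  unfold _root_.ext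
  rw [dif_neg (by omega)]

lemma included_of_false {c : ℕ → Bool} {k : ℕ} (h : c (k+1) = false) :
    included c (k+1) = false := by simp [included, h]

lemma ind_included_succ_true {c : ℕ → Bool} {k : ℕ} (h : c (k+1) = true) :
    ind (included c (k+1)) = 1 - ind (included c k) := by
  simp only [included, h, Bool.and_true]
  cases included c k <;> simp [ind]

def ee (p : ℝ) (a : ℕ) : ℝ := expVal p (a+1) (fun c => ind (included c a))
def gg (p : ℝ) (a b : ℕ) : ℝ :=
  expVal p (b+1) (fun c => ind (included c a) * ind (included c b))


variable {p : ℝ}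

lemma dep_e (a : ℕ) : ∀ c c' : ℕ → Bool, (∀ i < a+1, c i = c' i) →
    ind (included c a) = ind (included c' a) := by
  intro c c' h
  rw [included_congr (fun i hi => h i (by omega))]

lemma dep_g {a b : ℕ} (hab : a ≤ b) : ∀ c c' : ℕ → Bool, (∀ i < b+1, c i = c' i) →
    ind (included c a) * ind (included c b) = ind (included c' a) * ind (included c' b) := by
  intro c c' h
  rw [included_congr (fun i hi => h i (by omega)),
    included_congr (fun i (hi : i ≤ b) => h i (by omega))]


lemma ee_nonneg (hp0 : 0 < p) (hp1 : p < 1) (a : ℕ) : 0 ≤ ee p a :=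
  expVal_nonneg hp0.le hp1.le fun c => ind_nonneg _

lemma ee_le_one (hp0 : 0 < p) (hp1 : p < 1) (a : ℕ) : ee p a ≤ 1 := by
  have := expVal_mono (p := p) (n := a+1) hp0.le hp1.le
    (f := fun c => ind (included c a)) (g := fun _ => 1) (fun c => ind_le_one _)
  rw [expVal_const hp0.le] at this
  exact this

lemma ee_rec (hp0 : 0 < p) (hp1 : p < 1) (k : ℕ) : ee p (k+1) = p * (1 - ee p k) := by
  rw [ee, expVal_succ]
  have key : ∀ c : Fin (k+1) → Bool,
      wt p c * ((1 - p) * ind (included (ext (k+2) (Fin.snoc c false)) (k+1))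
        + p * ind (included (ext (k+2) (Fin.snoc c true)) (k+1)))
      = wt p c * (p * (1 - ind (included (ext (k+1) c) k))) := by
    intro c
    have h1 : included (ext (k+2) (Fin.snoc c false)) (k+1) = false := by
      apply included_of_false
      rw [ext_snoc_false]
      exact ext_ge c (by omega)
    have h2 : ind (included (ext (k+2) (Fin.snoc c true)) (k+1))
        = 1 - ind (included (ext (k+1) c) k) := by
      rw [ind_included_succ_true (ext_snoc_self c true),
        included_ext_snoc c true (by omega)]
    rw [h1, h2]
    simp [ind]
  rw [Finset.sum_congr rfl fun c _ => key c]
  have : (∑ c : Fin (k+1) → Bool, wt p c * (p * (1 - ind (included (ext (k+1) c) k))))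
      = expVal p (k+1) (fun c => p * (1 - ind (included c k))) := rfl
  rw [this, expVal_smul]
  congr 1
  have : expVal p (k+1) (fun c => 1 - ind (included c k))
      = expVal p (k+1) (fun c => 1 + (-1) * ind (included c k)) := by
    congr 1; funext c; ring
  rw [this, expVal_add (fun _ => (1:ℝ)), expVal_smul, expVal_const hp0.le, ee]
  ring

lemma gg_rec (hp0 : 0 < p) (hp1 : p < 1) {a b : ℕ} (hab : a ≤ b) : gg p a (b+1) = p * (ee p a - gg p a b) := by
  rw [gg, expVal_succ]
  have key : ∀ c : Fin (b+1) → Bool,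
      wt p c * ((1 - p) * (ind (included (ext (b+2) (Fin.snoc c false)) a)
          * ind (included (ext (b+2) (Fin.snoc c false)) (b+1)))
        + p * (ind (included (ext (b+2) (Fin.snoc c true)) a)
          * ind (included (ext (b+2) (Fin.snoc c true)) (b+1))))
      = wt p c * (p * (ind (included (ext (b+1) c) a)
          * (1 - ind (included (ext (b+1) c) b)))) := by
    intro c
    have h1 : included (ext (b+2) (Fin.snoc c false)) (b+1) = false := by
      apply included_of_false
      rw [ext_snoc_false]
      exact ext_ge c (by omega)
    have h2 : ind (included (ext (b+2) (Fin.snoc c true)) (b+1))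
        = 1 - ind (included (ext (b+1) c) b) := by
      rw [ind_included_succ_true (ext_snoc_self c true),
        included_ext_snoc c true (by omega)]
    have h3 : included (ext (b+2) (Fin.snoc c true)) a = included (ext (b+1) c) a :=
      included_ext_snoc c true (by omega)
    rw [h1, h2, h3]
    simp [ind]
  rw [Finset.sum_congr rfl fun c _ => key c]
  have e1 : (∑ c : Fin (b+1) → Bool, wt p c * (p * (ind (included (ext (b+1) c) a)
      * (1 - ind (included (ext (b+1) c) b)))))
      = expVal p (b+1) (fun c => p * (ind (included c a) * (1 - ind (included c b)))) := rfl
  rw [e1, expVal_smul]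
  congr 1
  have e2 : expVal p (b+1) (fun c => ind (included c a) * (1 - ind (included c b)))
      = expVal p (b+1) (fun c => ind (included c a)
          + (-1) * (ind (included c a) * ind (included c b))) := by
    congr 1; funext c; ring
  rw [e2, expVal_add, expVal_smul, gg,
    expVal_restrict hp0.le (fun c => ind (included c a)) (dep_e a) (by omega : a + 1 ≤ b + 1)]
  rw [ee]
  ring

lemma gg_diag (hp0 : 0 < p) (hp1 : p < 1) (a : ℕ) : gg p a a = ee p a := by
  rw [gg, ee]
  congr 1
  funext c
  exact ind_mul_self _

lemma cov_bound (hp0 : 0 < p) (hp1 : p < 1) : ∀ (d a : ℕ), |gg p a (a+d) - ee p a * ee p (a+d)| ≤ p ^ d := by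
  intro d
  induction d with
  | zero =>
      intro a
      rw [Nat.add_zero, gg_diag hp0 hp1, pow_zero]
      have h1 := ee_nonneg hp0 hp1 a
      have h2 := ee_le_one hp0 hp1 a
      rw [abs_le]
      constructor <;> nlinarith
  | succ d ih =>
      intro a
      have hb : a + (d+1) = (a + d) + 1 := by omega
      rw [hb, gg_rec hp0 hp1 (by omega), ee_rec hp0 hp1]
      have : p * (ee p a - gg p a (a+d)) - ee p a * (p * (1 - ee p (a+d)))
          = (-p) * (gg p a (a+d) - ee p a * ee p (a+d)) := by ring
      rw [this, abs_mul, abs_neg, abs_of_pos hp0, pow_succ, mul_comm (p^d) p]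
      exact mul_le_mul_of_nonneg_left (ih a) hp0.le

lemma cov_bound_n (hp0 : 0 < p) (hp1 : p < 1) {n a b : ℕ} (hab : a ≤ b) (hbn : b < n) :
    |expVal p n (fun c => ind (included c a) * ind (included c b))
      - expVal p n (fun c => ind (included c a)) * expVal p n (fun c => ind (included c b))|
    ≤ p ^ (b - a) := by
  rw [expVal_restrict hp0.le _ (dep_g hab) (by omega : b + 1 ≤ n),
    expVal_restrict hp0.le _ (dep_e a) (by omega : a + 1 ≤ n),
    expVal_restrict hp0.le _ (dep_e b) (by omega : b + 1 ≤ n)]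
  have := cov_bound hp0 hp1 (b - a) a
  rwa [Nat.add_sub_cancel' hab] at this



lemma geom_tail_le {p : ℝ} (hp0 : 0 < p) (hp1 : p < 1) (n : ℕ) :
    ∑ d ∈ range n, p ^ d ≤ 1 / (1 - p) := by
  rw [geom_sum_eq (by linarith)]
  have h : (p ^ n - 1) / (p - 1) = (1 - p ^ n) / (1 - p) := by
    rw [div_eq_div_iff (by linarith) (by linarith)]; ring
  rw [h, div_le_div_iff₀ (by linarith) (by linarith)]
  have : 0 ≤ p ^ n := pow_nonneg hp0.le n
  nlinarith

lemma geom_bound {p : ℝ} (hp0 : 0 < p) (hp1 : p < 1) {n i : ℕ} (hi : i ∈ Icc 1 n) :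
    ∑ j ∈ Icc 1 n, p ^ (Nat.dist i j) ≤ 2 / (1 - p) := by
  simp only [mem_Icc] at hi
  rw [← Finset.sum_filter_add_sum_filter_not (Icc 1 n) (fun j => j ≤ i)]
  have h1 : ∑ j ∈ (Icc 1 n).filter (fun j => j ≤ i), p ^ (Nat.dist i j)
      ≤ 1 / (1 - p) := by
    have e1 : ∑ j ∈ (Icc 1 n).filter (fun j => j ≤ i), p ^ (Nat.dist i j)
        = ∑ j ∈ (Icc 1 n).filter (fun j => j ≤ i), p ^ (i - j) := by
      refine Finset.sum_congr rfl fun j hj => ?_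
      simp only [mem_filter] at hj
      rw [Nat.dist_eq_sub_of_le_right hj.2]
    rw [e1, ← Finset.sum_image (f := fun d => p ^ d)
      (g := fun j => i - j) (by
        intro x hx y hy hxy
        simp only [Finset.mem_coe, mem_filter, mem_Icc] at hx hy
        simp only at hxy
        omega)]
    refine le_trans (Finset.sum_le_sum_of_subset_of_nonneg ?_
      (fun d _ _ => pow_nonneg hp0.le _)) (geom_tail_le hp0 hp1 n)
    intro d hd
    simp only [mem_image, mem_filter, mem_Icc] at hd
    simp only [mem_range]
    omega
  have h2 : ∑ j ∈ (Icc 1 n).filter (fun j => ¬ j ≤ i), p ^ (Nat.dist i j)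
      ≤ 1 / (1 - p) := by
    have e1 : ∑ j ∈ (Icc 1 n).filter (fun j => ¬ j ≤ i), p ^ (Nat.dist i j)
        = ∑ j ∈ (Icc 1 n).filter (fun j => ¬ j ≤ i), p ^ (j - i) := by
      refine Finset.sum_congr rfl fun j hj => ?_
      simp only [mem_filter] at hj
      rw [Nat.dist_eq_sub_of_le (by omega)]
    rw [e1, ← Finset.sum_image (f := fun d => p ^ d)
      (g := fun j => j - i) (by
        intro x hx y hy hxy
        simp only [Finset.mem_coe, mem_filter, mem_Icc] at hx hy
        simp only at hxy
        omega)]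
    refine le_trans (Finset.sum_le_sum_of_subset_of_nonneg ?_
      (fun d _ _ => pow_nonneg hp0.le _)) (geom_tail_le hp0 hp1 n)
    intro d hd
    simp only [mem_image, mem_filter, mem_Icc] at hd
    simp only [mem_range]
    omega
  have : (2:ℝ) / (1-p) = 1/(1-p) + 1/(1-p) := by ring
  rw [this]
  exact add_le_add h1 h2


open Classical in
/-- Let `S` be a subset of the Fibonacci numbers with asymptotic density `q(S)`, and
`Z_n = #(A_n(p) ∩ S)`. Then `Var(Z_n) = o(n²)`. -/
theorem variance_count_in_S (p : ℝ) (hp0 : 0 < p) (hp1 : p < 1)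
    (S : Set ℕ) (q : ℝ)
    (hq : Filter.Tendsto
      (fun n : ℕ => (((Finset.Icc 1 n).filter (fun i => Fib i ∈ S)).card : ℝ) / n)
      Filter.atTop (nhds q)) :
    Filter.Tendsto
      (fun n : ℕ =>
        expVal p n (fun c =>
          ((((Finset.Icc 1 n).filter
              (fun j => Fib j ∈ S ∧ included c (j - 1) = true)).card : ℝ)
            - expVal p n (fun c' =>
                (((Finset.Icc 1 n).filter
                  (fun j => Fib j ∈ S ∧ included c' (j - 1) = true)).card : ℝ))) ^ 2)
          / (n : ℝ) ^ 2)
      Filter.atTop (nhds 0) := by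
  classical
  -- notation
  set V : ℕ → ℝ := fun n =>
        expVal p n (fun c =>
          ((((Finset.Icc 1 n).filter
              (fun j => Fib j ∈ S ∧ included c (j - 1) = true)).card : ℝ)
            - expVal p n (fun c' =>
                (((Finset.Icc 1 n).filter
                  (fun j => Fib j ∈ S ∧ included c' (j - 1) = true)).card : ℝ))) ^ 2)
          / (n : ℝ) ^ 2 with hV
  have hVnonneg : ∀ n, 0 ≤ V n := by
    intro n
    apply div_nonneg _ (by positivity)
    exact expVal_nonneg hp0.le hp1.le fun c => sq_nonneg _
  have hVle : ∀ n : ℕ, 1 ≤ n → V n ≤ (2 / (1 - p)) / n := by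
    intro n hn
    -- the count as a sum of indicators
    set T : Finset ℕ := (Icc 1 n).filter (fun j => Fib j ∈ S) with hT
    set X : ℕ → (ℕ → Bool) → ℝ := fun j c => ind (included c (j - 1)) with hX
    have hZ : ∀ c : ℕ → Bool,
        ((((Finset.Icc 1 n).filter
            (fun j => Fib j ∈ S ∧ included c (j - 1) = true)).card : ℝ)
          = ∑ j ∈ T, X j c) := by
      intro c
      rw [hT, Finset.sum_filter, Finset.card_filter]
      push_cast
      refine Finset.sum_congr rfl fun j _ => ?_
      by_cases h1 : Fib j ∈ S <;> by_cases h2 : included c (j-1) = true <;>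
        simp [h1, h2, hX, ind]
    -- variance identity
    set μ : ℝ := expVal p n (fun c' =>
        (((Finset.Icc 1 n).filter
          (fun j => Fib j ∈ S ∧ included c' (j - 1) = true)).card : ℝ)) with hμ
    have hμ' : μ = ∑ j ∈ T, expVal p n (X j) := by
      rw [hμ]
      have : (fun c' : ℕ → Bool =>
          (((Finset.Icc 1 n).filter
            (fun j => Fib j ∈ S ∧ included c' (j - 1) = true)).card : ℝ))
          = fun c' => ∑ j ∈ T, X j c' := funext hZ
      rw [this, expVal_finsum]
    have hvar : expVal p n (fun c =>
        ((((Finset.Icc 1 n).filter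
            (fun j => Fib j ∈ S ∧ included c (j - 1) = true)).card : ℝ) - μ) ^ 2)
        = (∑ i ∈ T, ∑ j ∈ T, expVal p n (fun c => X i c * X j c)) - μ * μ := by
      have e1 : (fun c : ℕ → Bool =>
          ((((Finset.Icc 1 n).filter
            (fun j => Fib j ∈ S ∧ included c (j - 1) = true)).card : ℝ) - μ) ^ 2)
          = fun c => (∑ i ∈ T, ∑ j ∈ T, X i c * X j c)
              + ((-2 * μ) * (∑ j ∈ T, X j c) + μ * μ) := by
        funext c
        rw [hZ c, ← Finset.sum_mul_sum]
        ring
      rw [e1, expVal_add, expVal_add, expVal_smul, expVal_const hp0.le, expVal_finsum,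
        expVal_finsum, ← hμ']
      have : ∀ i ∈ T, expVal p n (fun c => ∑ j ∈ T, X i c * X j c)
          = ∑ j ∈ T, expVal p n (fun c => X i c * X j c) := fun i _ => expVal_finsum T _
      rw [Finset.sum_congr rfl this]
      ring
    -- covariance bound
    have hcov : ∀ i ∈ T, ∀ j ∈ T,
        expVal p n (fun c => X i c * X j c) - expVal p n (X i) * expVal p n (X j)
          ≤ p ^ (Nat.dist i j) := by
      intro i hi j hj
      rw [hT, mem_filter, mem_Icc] at hi hj
      rcases le_total i j with hij | hij
      · have := cov_bound_n hp0 hp1 (n := n) (a := i - 1) (b := j - 1)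
          (by omega) (by omega)
        have hd : Nat.dist i j = (j - 1) - (i - 1) := by
          rw [Nat.dist_eq_sub_of_le hij]; omega
        rw [hd]
        exact le_trans (le_abs_self _) this
      · have := cov_bound_n hp0 hp1 (n := n) (a := j - 1) (b := i - 1)
          (by omega) (by omega)
        have hd : Nat.dist i j = (i - 1) - (j - 1) := by
          rw [Nat.dist_eq_sub_of_le_right hij]; omega
        have hcomm : (fun c : ℕ → Bool => X i c * X j c)
            = fun c => ind (included c (j-1)) * ind (included c (i-1)) := by
          funext c; rw [hX]; ring
        rw [hd, hcomm]
        refine le_trans (le_trans ?_ (le_abs_self _)) this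
        rw [hX]
        apply le_of_eq
        ring_nf
    -- total bound
    have hsum : (∑ i ∈ T, ∑ j ∈ T, expVal p n (fun c => X i c * X j c)) - μ * μ
        ≤ n * (2 / (1 - p)) := by
      rw [hμ', Finset.sum_mul_sum, ← Finset.sum_sub_distrib]
      have e2 : ∀ i ∈ T, (∑ j ∈ T, expVal p n (fun c => X i c * X j c))
          - (∑ j ∈ T, expVal p n (X i) * expVal p n (X j))
          ≤ ∑ j ∈ Icc 1 n, p ^ (Nat.dist i j) := by
        intro i hi
        rw [← Finset.sum_sub_distrib]
        refine le_trans (Finset.sum_le_sum (hcov i hi)) ?_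
        refine Finset.sum_le_sum_of_subset_of_nonneg (filter_subset _ _)
          (fun j _ _ => pow_nonneg hp0.le _)
      refine le_trans (Finset.sum_le_sum e2) ?_
      have e3 : ∀ i ∈ T, (∑ j ∈ Icc 1 n, p ^ (Nat.dist i j)) ≤ 2 / (1 - p) := by
        intro i hi
        exact geom_bound hp0 hp1 (mem_of_mem_filter i hi)
      refine le_trans (Finset.sum_le_sum e3) ?_
      rw [Finset.sum_const, nsmul_eq_mul]
      have hcard : (T.card : ℝ) ≤ n := by
        have h1 := Finset.card_filter_le (Icc 1 n) (fun j => Fib j ∈ S)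
        have h2 : (Icc 1 n).card = n := by rw [Nat.card_Icc]; omega
        exact_mod_cast le_trans h1 (le_of_eq h2)
      have h2p : (0:ℝ) ≤ 2 / (1-p) := div_nonneg (by norm_num) (by linarith)
      exact mul_le_mul_of_nonneg_right hcard h2p
    -- conclude
    rw [hV]
    simp only
    rw [← hμ, hvar]
    rw [div_le_div_iff₀ (by positivity) (by positivity)]
    have hn' : (1:ℝ) ≤ n := by exact_mod_cast hn
    nlinarith [hsum, hVnonneg n]
  refine squeeze_zero' (Filter.Eventually.of_forall hVnonneg) ?_
    (tendsto_const_div_atTop_nhds_zero_nat (2 / (1-p)))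
  filter_upwards [Filter.eventually_ge_atTop 1] with n hn
  exact hVle n hn

end
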